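/- arXiv:2605.25608 — 2 statements merged into one kernel-verified Lean document; each statement's English description precedes it below -/
import Mathlib

section
/- Let φ_i ∈ NN(W_i, D, K_i) for i = 1, …, N be ReLU networks of the same depth D with the same input dimension. Then the concatenated map φ(x) := (φ_1(x), …, φ_N(x)) belongs to NN(∑_{i=1}^N W_i, D, (√(N+1))^D √(∑_{i=1}^N K_i²)). -/
open scoped BigOperators

noncomputable section

/-- ReLU activation. -/
def relu (t : ℝ) : ℝ := max 0 t

/-- Squared Frobenius norm of a matrix. -/
def frobSq {m n : ℕ} (A : Matrix (Fin m) (Fin n) ℝ) : ℝ := ∑ i, ∑ j, (A i j) ^ 2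

/-- Frobenius norm of a matrix. -/
def frob {m n : ℕ} (A : Matrix (Fin m) (Fin n) ℝ) : ℝ := Real.sqrt (frobSq A)

/-- Squared Euclidean norm of a vector. -/
def sqNorm {n : ℕ} (v : Fin n → ℝ) : ℝ := ∑ i, (v i) ^ 2

/-- A ReLU network of depth `D`, input dimension `d` and output dimension `k`:
layer widths `N 0 = d, N 1, …, N D, N (D+1) = k`, weight matrices `A ℓ` and biases `b ℓ`. -/
structure ReluNetwork (D d k : ℕ) where
  N : ℕ → ℕ
  hN0 : N 0 = d
  hNlast : N (D + 1) = k
  A : (ℓ : ℕ) → Matrix (Fin (N (ℓ + 1))) (Fin (N ℓ)) ℝ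
  b : (ℓ : ℕ) → Fin (N (ℓ + 1)) → ℝ

namespace ReluNetwork

variable {D d k : ℕ}

/-- Output of the `ℓ`-th hidden layer (after the ReLU). -/
def layer (net : ReluNetwork D d k) : (ℓ : ℕ) → (Fin d → ℝ) → Fin (net.N ℓ) → ℝ
  | 0 => fun x i => x (Fin.cast net.hN0 i)
  | (ℓ + 1) => fun x i =>
      relu ((∑ j, net.A ℓ i j * net.layer ℓ x j) + net.b ℓ i)

/-- The function realized by the network:
`f_θ(x) = A_D σ(A_{D-1} σ( ⋯ σ(A_0 x + b_0) ⋯ ) + b_{D-1})`. -/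
def realize (net : ReluNetwork D d k) (x : Fin d → ℝ) : Fin k → ℝ :=
  fun i => ∑ j, net.A D (Fin.cast net.hNlast.symm i) j * net.layer D x j

/-- Multiplicative Frobenius norm constraint
`κ(θ) = ‖A_D‖_F ∏_{ℓ<D} √(‖A_ℓ‖_F² + ‖b_ℓ‖² + 1)`. -/
def kappa (net : ReluNetwork D d k) : ℝ :=
  frob (net.A D) *
    ∏ ℓ ∈ Finset.range D, Real.sqrt (frobSq (net.A ℓ) + sqNorm (net.b ℓ) + 1)

/-- All (hidden) layer widths are at most `W`. -/
def widthLe (net : ReluNetwork D d k) (W : ℕ) : Prop :=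
  ∀ ℓ, 0 < ℓ → ℓ ≤ D → net.N ℓ ≤ W

end ReluNetwork

/-- The norm-constrained class `NN(W, D, K)` of functions `ℝ^d → ℝ^k` realized by depth-`D`
ReLU networks with all layer widths at most `W` and `κ(θ) ≤ K`. -/
def NNclass (d k W D : ℕ) (K : ℝ) : Set ((Fin d → ℝ) → Fin k → ℝ) :=
  {f | ∃ net : ReluNetwork D d k, net.widthLe W ∧ net.kappa ≤ K ∧ net.realize = f}

/-- Position of the `j`-th output of the `i`-th block inside the concatenation of blocks of
sizes `k 0, …, k (N-1)`. -/
def finAssemble {N : ℕ} (k : Fin N → ℕ) (i : Fin N) (j : Fin (k i)) : Fin (∑ i', k i') :=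
  ⟨(∑ i' ∈ Finset.univ.filter (fun i' : Fin N => i' < i), k i') + (j : ℕ), by
    have hj := j.isLt
    have hmem : i ∉ Finset.univ.filter (fun i' : Fin N => i' < i) := by simp
    have h1 : (∑ i' ∈ Finset.univ.filter (fun i' : Fin N => i' < i), k i') + (j : ℕ)
        < ∑ i' ∈ insert i (Finset.univ.filter (fun i' : Fin N => i' < i)), k i' := by
      rw [Finset.sum_insert hmem]; omega
    exact lt_of_lt_of_le h1 (Finset.sum_le_sum_of_subset (Finset.subset_univ _))⟩

/- ===== auxiliary material ===== -/

lemma frobSq_nonneg {m n : ℕ} (A : Matrix (Fin m) (Fin n) ℝ) : 0 ≤ frobSq A :=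
  Finset.sum_nonneg fun _ _ => Finset.sum_nonneg fun _ _ => sq_nonneg _

lemma sqNorm_nonneg {n : ℕ} (v : Fin n → ℝ) : 0 ≤ sqNorm v :=
  Finset.sum_nonneg fun _ _ => sq_nonneg _

lemma frob_nonneg {m n : ℕ} (A : Matrix (Fin m) (Fin n) ℝ) : 0 ≤ frob A :=
  Real.sqrt_nonneg _

lemma frobSq_smul {m n : ℕ} (c : ℝ) (A : Matrix (Fin m) (Fin n) ℝ) :
    frobSq (c • A) = c ^ 2 * frobSq A := by
  simp [frobSq, Matrix.smul_apply, smul_eq_mul, mul_pow, Finset.mul_sum]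

lemma sqNorm_smul {n : ℕ} (c : ℝ) (v : Fin n → ℝ) :
    sqNorm (c • v) = c ^ 2 * sqNorm v := by
  simp [sqNorm, Pi.smul_apply, smul_eq_mul, mul_pow, Finset.mul_sum]

lemma relu_mul {c t : ℝ} (hc : 0 ≤ c) : relu (c * t) = c * relu t := by
  unfold relu
  rw [mul_max_of_nonneg _ _ hc, mul_zero]

lemma kappa_nonneg {D d k : ℕ} (net : ReluNetwork D d k) : 0 ≤ net.kappa :=
  mul_nonneg (frob_nonneg _) (Finset.prod_nonneg fun _ _ => Real.sqrt_nonneg _)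

namespace ReluNetwork

variable {D d k : ℕ}

/-- Recursively defined squared rescaling factors. -/
def nq (net : ReluNetwork D d k) : ℕ → ℝ
  | 0 => 1
  | (ℓ + 1) => nq net ℓ / max (frobSq (net.A ℓ) + nq net ℓ * sqNorm (net.b ℓ)) 1

lemma nq_pos (net : ReluNetwork D d k) : ∀ ℓ, 0 < net.nq ℓ := by
  intro ℓ
  induction ℓ with
  | zero => norm_num [nq]
  | succ ℓ ih =>
      have h1 : (0:ℝ) < max (frobSq (net.A ℓ) + net.nq ℓ * sqNorm (net.b ℓ)) 1 :=
        lt_of_lt_of_le one_pos (le_max_right _ _)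
      exact div_pos ih h1

/-- `P ℓ = ∏_{j<ℓ} (‖A_j‖²+‖b_j‖²+1)`. -/
def nP (net : ReluNetwork D d k) (ℓ : ℕ) : ℝ :=
  ∏ j ∈ Finset.range ℓ, (frobSq (net.A j) + sqNorm (net.b j) + 1)

lemma nP_one_le (net : ReluNetwork D d k) (ℓ : ℕ) : 1 ≤ net.nP ℓ := by
  rw [nP]
  calc (1:ℝ) = ∏ _j ∈ Finset.range ℓ, 1 := by simp
    _ ≤ _ := by
        refine Finset.prod_le_prod (fun j _ => by norm_num) (fun j _ => ?_)
        have h1 := frobSq_nonneg (net.A j)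
        have h2 := sqNorm_nonneg (net.b j)
        linarith

lemma nq_nP (net : ReluNetwork D d k) : ∀ ℓ, 1 ≤ net.nq ℓ * net.nP ℓ := by
  intro ℓ
  induction ℓ with
  | zero => simp [nq, nP]
  | succ ℓ ih =>
      set a := frobSq (net.A ℓ) with ha
      set β := sqNorm (net.b ℓ) with hβ
      have ha0 : 0 ≤ a := frobSq_nonneg _
      have hβ0 : 0 ≤ β := sqNorm_nonneg _
      have hq : 0 < net.nq ℓ := net.nq_pos ℓ
      have hP : 1 ≤ net.nP ℓ := net.nP_one_le ℓ
      have hM : (0:ℝ) < max (a + net.nq ℓ * β) 1 := lt_of_lt_of_le one_pos (le_max_right _ _)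
      have hstep : net.nq (ℓ+1) = net.nq ℓ / max (a + net.nq ℓ * β) 1 := rfl
      have hPstep : net.nP (ℓ+1) = net.nP ℓ * (a + β + 1) := by
        rw [nP, Finset.prod_range_succ]; rfl
      rw [hstep, hPstep]
      rw [div_mul_eq_mul_div, one_le_div hM]
      have t1 : a ≤ net.nq ℓ * net.nP ℓ * a :=
        le_mul_of_one_le_left ha0 ih
      have t2 : net.nq ℓ * β ≤ net.nq ℓ * net.nP ℓ * β := by
        nlinarith [mul_nonneg (mul_nonneg hq.le (sub_nonneg.2 hP)) hβ0]
      have key : max (a + net.nq ℓ * β) 1 ≤ net.nq ℓ * net.nP ℓ * (a + β + 1) := by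
        apply max_le
        · nlinarith
        · nlinarith
      calc max (a + net.nq ℓ * β) 1 ≤ net.nq ℓ * net.nP ℓ * (a + β + 1) := key
        _ = net.nq ℓ * (net.nP ℓ * (a + β + 1)) := by ring
  
/-- Rescaled network realizing the same function. -/
def scaled (net : ReluNetwork D d k) : ReluNetwork D d k where
  N := net.N
  hN0 := net.hN0
  hNlast := net.hNlast
  A := fun ℓ => (if ℓ < D then Real.sqrt (net.nq (ℓ+1)) / Real.sqrt (net.nq ℓ)
      else 1 / Real.sqrt (net.nq D)) • net.A ℓ
  b := fun ℓ => Real.sqrt (net.nq (ℓ+1)) • net.b ℓ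

lemma scaled_layer (net : ReluNetwork D d k) :
    ∀ ℓ, ℓ ≤ D → ∀ (x : Fin d → ℝ) (j : Fin (net.N ℓ)),
      net.scaled.layer ℓ x j = Real.sqrt (net.nq ℓ) * net.layer ℓ x j := by
  intro ℓ
  induction ℓ with
  | zero =>
      intro _ x j
      show x _ = Real.sqrt (net.nq 0) * x _
      norm_num [nq]
      rfl
  | succ ℓ ih =>
      intro hℓ x j
      have hℓD : ℓ < D := hℓ
      have hq : 0 < net.nq ℓ := net.nq_pos ℓ
      have hq' : 0 < net.nq (ℓ+1) := net.nq_pos (ℓ+1)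
      have hsq : Real.sqrt (net.nq ℓ) ≠ 0 := by positivity
      have hA : net.scaled.A ℓ = (Real.sqrt (net.nq (ℓ+1)) / Real.sqrt (net.nq ℓ)) • net.A ℓ := by
        simp [scaled, hℓD]
      have hb : net.scaled.b ℓ = Real.sqrt (net.nq (ℓ+1)) • net.b ℓ := rfl
      have hsum : (∑ q', net.scaled.A ℓ j q' * net.scaled.layer ℓ x q') + net.scaled.b ℓ j
          = Real.sqrt (net.nq (ℓ+1)) * ((∑ q', net.A ℓ j q' * net.layer ℓ x q') + net.b ℓ j) := by
        rw [hA, hb, mul_add, Finset.mul_sum]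
        refine congrArg₂ (· + ·) ?_ (by simp [Pi.smul_apply, smul_eq_mul])
        apply Finset.sum_congr rfl
        intro q _
        rw [ih (le_of_lt hℓD) x q]
        show (Real.sqrt (net.nq (ℓ+1)) / Real.sqrt (net.nq ℓ)) * net.A ℓ j q
            * (Real.sqrt (net.nq ℓ) * net.layer ℓ x q) = _
        field_simp
      show relu ((∑ q', net.scaled.A ℓ j q' * net.scaled.layer ℓ x q') + net.scaled.b ℓ j)
          = Real.sqrt (net.nq (ℓ+1)) * relu ((∑ q', net.A ℓ j q' * net.layer ℓ x q') + net.b ℓ j)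
      rw [hsum, relu_mul (Real.sqrt_nonneg _)]

lemma scaled_realize (net : ReluNetwork D d k) : net.scaled.realize = net.realize := by
  funext x i
  show ∑ j, net.scaled.A D _ j * net.scaled.layer D x j = _
  have hq : 0 < net.nq D := net.nq_pos D
  have hsq : Real.sqrt (net.nq D) ≠ 0 := by positivity
  have hA : net.scaled.A D = (1 / Real.sqrt (net.nq D)) • net.A D := by
    simp [scaled]
  rw [hA]
  apply Finset.sum_congr rfl
  intro q _
  rw [net.scaled_layer D le_rfl x q]
  show (1 / Real.sqrt (net.nq D)) * net.A D _ q * (Real.sqrt (net.nq D) * net.layer D x q) = _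
  field_simp
  exact mul_comm _ _

lemma scaled_hidden_le_one (net : ReluNetwork D d k) (ℓ : ℕ) (hℓ : ℓ < D) :
    frobSq (net.scaled.A ℓ) + sqNorm (net.scaled.b ℓ) ≤ 1 := by
  have hq : 0 < net.nq ℓ := net.nq_pos ℓ
  have ha0 : 0 ≤ frobSq (net.A ℓ) := frobSq_nonneg _
  have hβ0 : 0 ≤ sqNorm (net.b ℓ) := sqNorm_nonneg _
  have hM : (0:ℝ) < max (frobSq (net.A ℓ) + net.nq ℓ * sqNorm (net.b ℓ)) 1 :=
    lt_of_lt_of_le one_pos (le_max_right _ _)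
  have hA : net.scaled.A ℓ = (Real.sqrt (net.nq (ℓ+1)) / Real.sqrt (net.nq ℓ)) • net.A ℓ := by
    simp [scaled, hℓ]
  have hb : net.scaled.b ℓ = Real.sqrt (net.nq (ℓ+1)) • net.b ℓ := rfl
  have eA : frobSq (net.scaled.A ℓ)
      = (Real.sqrt (net.nq (ℓ+1)) / Real.sqrt (net.nq ℓ)) ^ 2 * frobSq (net.A ℓ) := by
    rw [hA]; exact frobSq_smul _ _
  have eb : sqNorm (net.scaled.b ℓ) = Real.sqrt (net.nq (ℓ+1)) ^ 2 * sqNorm (net.b ℓ) := by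
    rw [hb]; exact sqNorm_smul _ _
  rw [eA, eb]
  have h1 : (Real.sqrt (net.nq (ℓ+1)) / Real.sqrt (net.nq ℓ)) ^ 2 = net.nq (ℓ+1) / net.nq ℓ := by
    rw [div_pow, Real.sq_sqrt (le_of_lt (net.nq_pos _)), Real.sq_sqrt (le_of_lt hq)]
  have h2 : Real.sqrt (net.nq (ℓ+1)) ^ 2 = net.nq (ℓ+1) :=
    Real.sq_sqrt (le_of_lt (net.nq_pos _))
  rw [h1, h2]
  have hstep : net.nq (ℓ+1) = net.nq ℓ / max (frobSq (net.A ℓ) + net.nq ℓ * sqNorm (net.b ℓ)) 1 :=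
    rfl
  rw [hstep]
  set M := max (frobSq (net.A ℓ) + net.nq ℓ * sqNorm (net.b ℓ)) 1 with hMdef
  have e1 : net.nq ℓ / M / net.nq ℓ = 1 / M := by
    rw [div_right_comm, div_self hq.ne']
  rw [e1, div_mul_eq_mul_div, div_mul_eq_mul_div, ← add_div, div_le_one hM, one_mul]
  exact le_max_left _ _

lemma scaled_last_le_kappa (net : ReluNetwork D d k) : frob (net.scaled.A D) ≤ net.kappa := by
  have hq : 0 < net.nq D := net.nq_pos D
  have hA : net.scaled.A D = (1 / Real.sqrt (net.nq D)) • net.A D := by simp [scaled]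
  have hF : frobSq (net.scaled.A D) = (1 / net.nq D) * frobSq (net.A D) := by
    rw [show frobSq (net.scaled.A D) = (1 / Real.sqrt (net.nq D)) ^ 2 * frobSq (net.A D) by
      rw [hA]; exact frobSq_smul _ _, div_pow, one_pow, Real.sq_sqrt (le_of_lt hq)]
  have hk2 : net.kappa ^ 2 = frobSq (net.A D) * net.nP D := by
    rw [ReluNetwork.kappa, mul_pow, ← Finset.prod_pow]
    rw [frob, Real.sq_sqrt (frobSq_nonneg _)]
    congr 1
    apply Finset.prod_congr rfl
    intro j _
    rw [Real.sq_sqrt]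
    have := frobSq_nonneg (net.A j); have := sqNorm_nonneg (net.b j); linarith
  have hle : frobSq (net.scaled.A D) ≤ net.kappa ^ 2 := by
    rw [hF, hk2]
    have h1 : 1 / net.nq D ≤ net.nP D := by
      rw [div_le_iff₀ hq, mul_comm]
      exact net.nq_nP D
    have := frobSq_nonneg (net.A D)
    nlinarith
  have := Real.sqrt_le_sqrt hle
  rwa [Real.sqrt_sq (kappa_nonneg net)] at this

end ReluNetwork

/- ===== assembling equivalence ===== -/

lemma finAssemble_lt {N : ℕ} (k : Fin N → ℕ) {a b : Fin N} (ja : Fin (k a)) (jb : Fin (k b))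
    (hab : a < b) : ((finAssemble k a ja : Fin (∑ i', k i')) : ℕ) < (finAssemble k b jb : ℕ) := by
  simp only [finAssemble]
  have hsub : insert a (Finset.univ.filter (fun t : Fin N => t < a)) ⊆
      Finset.univ.filter (fun t : Fin N => t < b) := by
    intro t ht
    simp only [Finset.mem_insert, Finset.mem_filter, Finset.mem_univ, true_and] at ht ⊢
    rcases ht with rfl | ht
    · exact hab
    · exact lt_trans ht hab
  have hmem : a ∉ Finset.univ.filter (fun t : Fin N => t < a) := by simp
  have h := Finset.sum_le_sum_of_subset hsub (f := k)
  rw [Finset.sum_insert hmem] at h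
  have hja := ja.isLt
  omega

lemma finAssemble_inj {N : ℕ} (k : Fin N → ℕ) :
    Function.Injective (fun s : Σ i, Fin (k i) => finAssemble k s.1 s.2) := by
  rintro ⟨i, j⟩ ⟨i', j'⟩ h
  simp only at h
  have hval : ((finAssemble k i j : Fin (∑ i', k i')) : ℕ) = (finAssemble k i' j' : ℕ) := by
    rw [h]
  have hii : i = i' := by
    by_contra hne
    rcases lt_or_gt_of_ne hne with hlt | hlt
    · exact absurd hval (Nat.ne_of_lt (finAssemble_lt k j j' hlt))
    · exact absurd hval.symm (Nat.ne_of_lt (finAssemble_lt k j' j hlt))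
  subst hii
  simp only [finAssemble, Fin.mk.injEq] at hval
  have : (j : ℕ) = (j' : ℕ) := by omega
  simp [Fin.ext_iff, this]

/-- Equivalence between `Σ i, Fin (k i)` and `Fin (∑ i, k i)` whose forward map is
`finAssemble`. -/
noncomputable def assembleEquiv {N : ℕ} (k : Fin N → ℕ) : (Σ i, Fin (k i)) ≃ Fin (∑ i', k i') :=
  Equiv.ofBijective (fun s => finAssemble k s.1 s.2)
    ((Fintype.bijective_iff_injective_and_card _).2 ⟨finAssemble_inj k, by simp⟩)

lemma assembleEquiv_symm_apply {N : ℕ} (k : Fin N → ℕ) (i : Fin N) (j : Fin (k i)) :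
    (assembleEquiv k).symm (finAssemble k i j) = ⟨i, j⟩ :=
  (assembleEquiv k).symm_apply_apply ⟨i, j⟩

lemma sum_assemble {N : ℕ} (k : Fin N → ℕ) {M : Type*} [AddCommMonoid M]
    (f : Fin (∑ i', k i') → M) :
    ∑ c, f c = ∑ i, ∑ j, f (finAssemble k i j) := by
  rw [← Equiv.sum_comp (assembleEquiv k) f, ← Finset.univ_sigma_univ, Finset.sum_sigma]
  rfl

/- ===== the big (concatenated) network ===== -/

section Big

variable {D d N : ℕ} {k : Fin N → ℕ}

/-- Widths of the concatenated network. -/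
def bigN (g : (i : Fin N) → ReluNetwork D d (k i)) : ℕ → ℕ
  | 0 => d
  | (m + 1) => ∑ i, (g i).N (m + 1)

/-- Weight matrices of the concatenated network. -/
noncomputable def bigA (g : (i : Fin N) → ReluNetwork D d (k i)) :
    (ℓ : ℕ) → Matrix (Fin (bigN g (ℓ + 1))) (Fin (bigN g ℓ)) ℝ
  | 0 => fun r c =>
      (g ((assembleEquiv (fun i => (g i).N 1)).symm r).1).A 0
        ((assembleEquiv (fun i => (g i).N 1)).symm r).2
        (Fin.cast (g ((assembleEquiv (fun i => (g i).N 1)).symm r).1).hN0.symm c)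
  | (m + 1) => fun r c =>
      let s := (assembleEquiv (fun i => (g i).N (m + 2))).symm r
      let t := (assembleEquiv (fun i => (g i).N (m + 1))).symm c
      if h : s.1 = t.1 then (g s.1).A (m + 1) s.2 (Fin.cast (by rw [h]) t.2) else 0

/-- Biases of the concatenated network. -/
noncomputable def bigB (g : (i : Fin N) → ReluNetwork D d (k i)) (ℓ : ℕ) :
    Fin (bigN g (ℓ + 1)) → ℝ := fun r =>
  (g ((assembleEquiv (fun i => (g i).N (ℓ + 1))).symm r).1).b ℓ
    ((assembleEquiv (fun i => (g i).N (ℓ + 1))).symm r).2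

/-- The concatenated network. -/
noncomputable def bigNet (g : (i : Fin N) → ReluNetwork D d (k i)) :
    ReluNetwork D d (∑ i, k i) where
  N := bigN g
  hN0 := rfl
  hNlast := Finset.sum_congr rfl (fun i _ => (g i).hNlast)
  A := bigA g
  b := bigB g

lemma bigB_apply (g : (i : Fin N) → ReluNetwork D d (k i)) (ℓ : ℕ) (i : Fin N)
    (j : Fin ((g i).N (ℓ + 1))) :
    bigB g ℓ (finAssemble (fun i' => (g i').N (ℓ + 1)) i j) = (g i).b ℓ j :=
  congrArg (fun s : Σ i', Fin ((g i').N (ℓ + 1)) => (g s.1).b ℓ s.2)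
    (assembleEquiv_symm_apply (fun i' => (g i').N (ℓ + 1)) i j)

lemma bigA_zero_apply (g : (i : Fin N) → ReluNetwork D d (k i)) (i : Fin N)
    (j : Fin ((g i).N 1)) (c : Fin d) :
    bigA g 0 (finAssemble (fun i' => (g i').N 1) i j) c
      = (g i).A 0 j (Fin.cast (g i).hN0.symm c) :=
  congrArg (fun s : Σ i', Fin ((g i').N 1) => (g s.1).A 0 s.2 (Fin.cast (g s.1).hN0.symm c))
    (assembleEquiv_symm_apply (fun i' => (g i').N 1) i j)

lemma bigA_succ_apply (g : (i : Fin N) → ReluNetwork D d (k i)) (m : ℕ) (i i' : Fin N)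
    (j : Fin ((g i).N (m + 2))) (q : Fin ((g i').N (m + 1))) :
    bigA g (m + 1) (finAssemble (fun i0 => (g i0).N (m + 2)) i j)
        (finAssemble (fun i0 => (g i0).N (m + 1)) i' q)
      = if h : i = i' then (g i).A (m + 1) j (Fin.cast (by rw [h]) q) else 0 := by
  have h1 := assembleEquiv_symm_apply (fun i0 => (g i0).N (m + 2)) i j
  have h2 := assembleEquiv_symm_apply (fun i0 => (g i0).N (m + 1)) i' q
  exact congrArg₂
    (fun (s : Σ i0, Fin ((g i0).N (m + 2))) (t : Σ i0, Fin ((g i0).N (m + 1))) =>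
      if h : s.1 = t.1 then (g s.1).A (m + 1) s.2 (Fin.cast (by rw [h]) t.2) else 0) h1 h2

/-- Key structural lemma: the row of the big network indexed by block `(i, p)` computes the
corresponding row of network `i`. -/
lemma bigRow (g : (i : Fin N) → ReluNetwork D d (k i)) :
    ∀ (m : ℕ) (x : Fin d → ℝ) (i : Fin N) (p : Fin ((g i).N (m + 1))),
      (∑ c, (bigNet g).A m (finAssemble (fun i' => (g i').N (m + 1)) i p) c
          * (bigNet g).layer m x c)
        = ∑ q, (g i).A m p q * (g i).layer m x q := by
  intro m
  induction m with
  | zero =>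
      intro x i p
      refine (Fintype.sum_equiv (finCongr (g i).hN0) _ _ ?_).symm
      intro q
      show (g i).A 0 p q * x (Fin.cast (g i).hN0 q)
          = bigA g 0 _ (finCongr (g i).hN0 q) * x (Fin.cast rfl (finCongr (g i).hN0 q))
      rw [bigA_zero_apply]
      rfl
  | succ m ih =>
      intro x i p
      have hl : ∀ (i' : Fin N) (q : Fin ((g i').N (m + 1))),
          (bigNet g).layer (m + 1) x (finAssemble (fun i0 => (g i0).N (m + 1)) i' q)
            = (g i').layer (m + 1) x q := by
        intro i' q
        show relu _ = relu _
        rw [ih x i' q]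
        show relu ((∑ q1, (g i').A m q q1 * (g i').layer m x q1)
            + bigB g m (finAssemble (fun i0 => (g i0).N (m + 1)) i' q)) = _
        rw [bigB_apply]
      show (∑ c : Fin (∑ i0, (g i0).N (m + 1)),
          bigA g (m + 1) (finAssemble (fun i' => (g i').N (m + 2)) i p) c
            * (bigNet g).layer (m + 1) x c)
        = ∑ q, (g i).A (m + 1) p q * (g i).layer (m + 1) x q
      rw [sum_assemble (fun i0 => (g i0).N (m + 1))]
      rw [Finset.sum_eq_single i]
      · apply Finset.sum_congr rfl
        intro q _
        rw [hl i q, bigA_succ_apply, dif_pos rfl]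
        rfl
      · intro i' _ hne
        apply Finset.sum_eq_zero
        intro q _
        rw [bigA_succ_apply, dif_neg (fun hh => hne hh.symm), zero_mul]
      · intro h
        exact absurd (Finset.mem_univ i) h

lemma big_realize (g : (i : Fin N) → ReluNetwork D d (k i)) (x : Fin d → ℝ) (i : Fin N)
    (j : Fin (k i)) :
    (bigNet g).realize x (finAssemble k i j) = (g i).realize x j := by
  show (∑ c, (bigNet g).A D (Fin.cast (bigNet g).hNlast.symm (finAssemble k i j)) c
      * (bigNet g).layer D x c) = _
  have hcast : Fin.cast (bigNet g).hNlast.symm (finAssemble k i j)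
      = finAssemble (fun i' => (g i').N (D + 1)) i (Fin.cast (g i).hNlast.symm j) := by
    apply Fin.ext
    show ((finAssemble k i j : Fin (∑ i', k i')) : ℕ)
        = ((finAssemble (fun i' => (g i').N (D + 1)) i (Fin.cast (g i).hNlast.symm j) : _) : ℕ)
    simp only [finAssemble]
    exact congrArg₂ (· + ·) (Finset.sum_congr rfl (fun t _ => ((g t).hNlast).symm)) rfl
  rw [hcast, bigRow g D x i (Fin.cast (g i).hNlast.symm j)]
  rfl

lemma frobSq_bigA (g : (i : Fin N) → ReluNetwork D d (k i)) (ℓ : ℕ) :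
    frobSq (bigA g ℓ) = ∑ i, frobSq ((g i).A ℓ) := by
  cases ℓ with
  | zero =>
      show (∑ r : Fin (∑ i', (g i').N 1), ∑ c : Fin d, bigA g 0 r c ^ 2) = _
      rw [sum_assemble (fun i' => (g i').N 1)]
      apply Finset.sum_congr rfl
      intro i _
      apply Finset.sum_congr rfl
      intro p _
      refine (Fintype.sum_equiv (finCongr (g i).hN0) _ _ ?_).symm
      intro q
      rw [bigA_zero_apply]
      rfl
  | succ m =>
      show (∑ r : Fin (∑ i', (g i').N (m + 2)), ∑ c : Fin (∑ i', (g i').N (m + 1)),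
          bigA g (m + 1) r c ^ 2) = _
      rw [sum_assemble (fun i' => (g i').N (m + 2))]
      apply Finset.sum_congr rfl
      intro i _
      apply Finset.sum_congr rfl
      intro p _
      rw [sum_assemble (fun i' => (g i').N (m + 1))]
      rw [Finset.sum_eq_single i]
      · apply Finset.sum_congr rfl
        intro q _
        rw [bigA_succ_apply, dif_pos rfl]
        rfl
      · intro i' _ hne
        apply Finset.sum_eq_zero
        intro q _
        rw [bigA_succ_apply, dif_neg (fun hh => hne hh.symm)]
        norm_num
      · intro h
        exact absurd (Finset.mem_univ i) h

lemma sqNorm_bigB (g : (i : Fin N) → ReluNetwork D d (k i)) (ℓ : ℕ) :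
    sqNorm (bigB g ℓ) = ∑ i, sqNorm ((g i).b ℓ) := by
  show (∑ r : Fin (∑ i', (g i').N (ℓ + 1)), bigB g ℓ r ^ 2) = _
  rw [sum_assemble (fun i' => (g i').N (ℓ + 1))]
  apply Finset.sum_congr rfl
  intro i _
  apply Finset.sum_congr rfl
  intro p _
  rw [bigB_apply]

end Big

/-- **Concatenation.** If `φ i ∈ NN(W i, D, K i)` for `i = 1, …, N` are ReLU
networks of the same depth `D` and input dimension `d`, then the concatenated map
`x ↦ (φ 1 x, …, φ N x)` belongs to `NN(∑ i, W i, D, (√(N+1))^D √(∑ i, (K i)²))`. -/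
theorem concatenation_NN (d D N : ℕ) (k : Fin N → ℕ) (W : Fin N → ℕ) (K : Fin N → ℝ)
    (φ : (i : Fin N) → (Fin d → ℝ) → Fin (k i) → ℝ)
    (hφ : ∀ i, φ i ∈ NNclass d (k i) (W i) D (K i)) :
    ∃ Φ ∈ NNclass d (∑ i, k i) (∑ i, W i) D
        (Real.sqrt ((N : ℝ) + 1) ^ D * Real.sqrt (∑ i, K i ^ 2)),
      ∀ (x : Fin d → ℝ) (i : Fin N) (j : Fin (k i)), Φ x (finAssemble k i j) = φ i x j := by
  obtain ⟨net, hnet⟩ : ∃ net : (i : Fin N) → ReluNetwork D d (k i),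
      ∀ i, (net i).widthLe (W i) ∧ (net i).kappa ≤ K i ∧ (net i).realize = φ i :=
    ⟨fun i => (hφ i).choose, fun i => (hφ i).choose_spec⟩
  set g : (i : Fin N) → ReluNetwork D d (k i) := fun i => (net i).scaled with hg
  refine ⟨(bigNet g).realize, ⟨bigNet g, ?_, ?_, rfl⟩, ?_⟩
  · -- width bound
    intro ℓ hpos hle
    cases ℓ with
    | zero => exact absurd hpos (lt_irrefl 0)
    | succ m =>
        show (∑ i, (g i).N (m + 1)) ≤ ∑ i, W i
        apply Finset.sum_le_sum
        intro i _
        exact (hnet i).1 (m + 1) (Nat.succ_pos m) hle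
  · -- kappa bound
    show frob (bigA g D) *
        (∏ ℓ ∈ Finset.range D, Real.sqrt (frobSq (bigA g ℓ) + sqNorm (bigB g ℓ) + 1))
      ≤ Real.sqrt ((N : ℝ) + 1) ^ D * Real.sqrt (∑ i, K i ^ 2)
    have hfrob : frob (bigA g D) ≤ Real.sqrt (∑ i, K i ^ 2) := by
      rw [frob, frobSq_bigA]
      apply Real.sqrt_le_sqrt
      apply Finset.sum_le_sum
      intro i _
      have h1 : frob ((g i).A D) ≤ K i :=
        le_trans ((net i).scaled_last_le_kappa) ((hnet i).2.1)
      have h2 : 0 ≤ frob ((g i).A D) := frob_nonneg _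
      have h3 : frobSq ((g i).A D) = frob ((g i).A D) ^ 2 :=
        (Real.sq_sqrt (frobSq_nonneg _)).symm
      rw [h3]
      exact pow_le_pow_left₀ h2 h1 2
    have hfac : ∀ ℓ ∈ Finset.range D,
        Real.sqrt (frobSq (bigA g ℓ) + sqNorm (bigB g ℓ) + 1) ≤ Real.sqrt ((N : ℝ) + 1) := by
      intro ℓ hℓ
      apply Real.sqrt_le_sqrt
      rw [frobSq_bigA, sqNorm_bigB, ← Finset.sum_add_distrib]
      have hsum : (∑ i, (frobSq ((g i).A ℓ) + sqNorm ((g i).b ℓ))) ≤ ∑ _i : Fin N, (1:ℝ) :=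
        Finset.sum_le_sum fun i _ => (net i).scaled_hidden_le_one ℓ (Finset.mem_range.1 hℓ)
      have hcard : (∑ _i : Fin N, (1:ℝ)) = (N : ℝ) := by simp
      linarith
    have hprod : (∏ ℓ ∈ Finset.range D, Real.sqrt (frobSq (bigA g ℓ) + sqNorm (bigB g ℓ) + 1))
        ≤ Real.sqrt ((N : ℝ) + 1) ^ D := by
      calc (∏ ℓ ∈ Finset.range D, Real.sqrt (frobSq (bigA g ℓ) + sqNorm (bigB g ℓ) + 1))
          ≤ ∏ _ℓ ∈ Finset.range D, Real.sqrt ((N : ℝ) + 1) :=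
            Finset.prod_le_prod (fun ℓ _ => Real.sqrt_nonneg _) hfac
        _ = Real.sqrt ((N : ℝ) + 1) ^ D := by rw [Finset.prod_const, Finset.card_range]
    have h1 := mul_le_mul hfrob hprod
      (Finset.prod_nonneg fun ℓ _ => Real.sqrt_nonneg _) (Real.sqrt_nonneg _)
    calc frob (bigA g D) *
          (∏ ℓ ∈ Finset.range D, Real.sqrt (frobSq (bigA g ℓ) + sqNorm (bigB g ℓ) + 1))
        ≤ Real.sqrt (∑ i, K i ^ 2) * Real.sqrt ((N : ℝ) + 1) ^ D := h1
      _ = Real.sqrt ((N : ℝ) + 1) ^ D * Real.sqrt (∑ i, K i ^ 2) := mul_comm _ _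
  · -- realization
    intro x i j
    rw [big_realize g x i j]
    rw [show (g i).realize = φ i from ((net i).scaled_realize).trans ((hnet i).2.2)]
end
end

section
/- For every k ∈ ℕ with k ≥ 1, define Ψ(x,y) := 2(φ̃_k((x+y)/2) − φ̃_k(x/2) − φ̃_k(y/2)) and ψ_k(x,y) := min{max{Ψ(x,y), −1}, 1}. Then for all (x,y) ∈ [−1,1]²: |xy − Ψ(x,y)| ≤ 3/k², hence |xy − ψ_k(x,y)| ≤ 3/k² and ψ_k(x,y) ∈ [−1,1]; moreover ψ_k(x,y) = 0 whenever xy = 0. -/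
open scoped BigOperators

noncomputable section

/-- `φ_k(x) = (1/k) ∑_{i=1}^k 2 σ(x − (2i−1)/(2k))` with `σ(t) = max 0 t` the ReLU. -/
def phiK (k : ℕ) (x : ℝ) : ℝ :=
  (1 / (k : ℝ)) * ∑ i ∈ Finset.Icc 1 k, 2 * max 0 (x - (2 * (i : ℝ) - 1) / (2 * (k : ℝ)))

/-- Even extension `φ̃_k(t) = φ_k(t) + φ_k(−t)`. -/
def phiTilde (k : ℕ) (t : ℝ) : ℝ := phiK k t + phiK k (-t)

/-- `Ψ(x,y) = 2(φ̃_k((x+y)/2) − φ̃_k(x/2) − φ̃_k(y/2))`, from the polarization identity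
`xy = 2(((x+y)/2)² − (x/2)² − (y/2)²)`. -/
def PsiK (k : ℕ) (x y : ℝ) : ℝ :=
  2 * (phiTilde k ((x + y) / 2) - phiTilde k (x / 2) - phiTilde k (y / 2))

/-- `ψ_k(x,y) = min (max (Ψ(x,y)) (−1)) 1`, the clipped multiplier. -/
def psiK (k : ℕ) (x y : ℝ) : ℝ := min (max (PsiK k x y) (-1)) 1


lemma sum_odd (j : ℕ) : ∑ i ∈ Finset.Icc 1 j, (2*(i:ℝ) - 1) = (j:ℝ)^2 := by
  induction j with
  | zero => simp
  | succ n ih =>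
    rw [Finset.sum_Icc_succ_top (Nat.one_le_iff_ne_zero.mpr (Nat.succ_ne_zero n)), ih]
    push_cast; ring

lemma phiK_of_nonpos (k : ℕ) {x : ℝ} (hx : x ≤ 0) : phiK k x = 0 := by
  unfold phiK
  rw [Finset.sum_eq_zero, mul_zero]
  intro i hi
  simp only [Finset.mem_Icc] at hi
  have h1 : (1:ℝ) ≤ (i:ℝ) := by exact_mod_cast hi.1
  have hk0 : (0:ℝ) ≤ (k:ℝ) := Nat.cast_nonneg k
  have hnn : (0:ℝ) ≤ (2*(i:ℝ)-1)/(2*(k:ℝ)) := div_nonneg (by linarith) (by linarith)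
  have : x - (2*(i:ℝ)-1)/(2*(k:ℝ)) ≤ 0 := by linarith
  rw [max_eq_left this, mul_zero]

lemma phiK_approx (k : ℕ) (hk : 1 ≤ k) {x : ℝ} (hx0 : 0 ≤ x) (hx1 : x ≤ 1) :
    |x^2 - phiK k x| ≤ 1/(4*(k:ℝ)^2) := by
  have hk0 : (0:ℝ) < k := by exact_mod_cast hk
  set j := ⌊(k:ℝ)*x⌋₊ with hjdef
  have hjle : (j:ℝ) ≤ (k:ℝ)*x := Nat.floor_le (by positivity)
  have hjlt : (k:ℝ)*x < (j:ℝ)+1 := Nat.lt_floor_add_one _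
  have hjk : j ≤ k := by
    have : (j:ℝ) ≤ (k:ℝ) := by nlinarith
    exact_mod_cast this
  have key : phiK k x = 2*(j:ℝ)*x/(k:ℝ) - (j:ℝ)^2/(k:ℝ)^2
      + (2/(k:ℝ)) * max 0 (x - (2*(j:ℝ)+1)/(2*(k:ℝ))) := by
    have hIcc : Finset.Icc 1 k = Finset.Ioc 0 k := rfl
    have hIccj : Finset.Icc 1 j = Finset.Ioc 0 j := rfl
    have hsplit : (∑ i ∈ Finset.Ioc 0 j, (2 * max 0 (x - (2*(i:ℝ)-1)/(2*(k:ℝ)))))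
        + (∑ i ∈ Finset.Ioc j k, (2 * max 0 (x - (2*(i:ℝ)-1)/(2*(k:ℝ)))))
        = ∑ i ∈ Finset.Ioc 0 k, (2 * max 0 (x - (2*(i:ℝ)-1)/(2*(k:ℝ)))) :=
      Finset.sum_Ioc_consecutive _ (Nat.zero_le j) hjk
    have hsum1 : (∑ i ∈ Finset.Ioc 0 j, (2 * max 0 (x - (2*(i:ℝ)-1)/(2*(k:ℝ)))))
        = 2*(j:ℝ)*x - (j:ℝ)^2/(k:ℝ) := by
      rw [← hIccj]
      have hcong : ∀ i ∈ Finset.Icc 1 j, (2 * max 0 (x - (2*(i:ℝ)-1)/(2*(k:ℝ))))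
          = 2*x - (2*(i:ℝ)-1)/(k:ℝ) := by
        intro i hi
        simp only [Finset.mem_Icc] at hi
        have hij : (i:ℝ) ≤ (j:ℝ) := by exact_mod_cast hi.2
        have hpos : 0 ≤ x - (2*(i:ℝ)-1)/(2*(k:ℝ)) := by
          rw [sub_nonneg, div_le_iff₀ (by positivity)]
          nlinarith
        rw [max_eq_right hpos]
        field_simp
      rw [Finset.sum_congr rfl hcong, Finset.sum_sub_distrib, Finset.sum_const,
        ← Finset.sum_div, sum_odd]
      simp only [Nat.card_Icc, Nat.add_sub_cancel, nsmul_eq_mul]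
      ring
    have hsum2 : (∑ i ∈ Finset.Ioc j k, (2 * max 0 (x - (2*(i:ℝ)-1)/(2*(k:ℝ)))))
        = 2 * max 0 (x - (2*(j:ℝ)+1)/(2*(k:ℝ))) := by
      rcases lt_or_eq_of_le hjk with hlt | heq
      · have hmem : j+1 ∈ Finset.Ioc j k := by
          simp only [Finset.mem_Ioc]
          exact ⟨Nat.lt_succ_self j, hlt⟩
        rw [Finset.sum_eq_single_of_mem (j+1) hmem]
        · push_cast; ring_nf
        · intro i hi hne
          simp only [Finset.mem_Ioc] at hi
          have hij : j + 2 ≤ i := by omega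
          have hij' : (j:ℝ) + 2 ≤ (i:ℝ) := by exact_mod_cast hij
          have hneg : x - (2*(i:ℝ)-1)/(2*(k:ℝ)) ≤ 0 := by
            rw [sub_nonpos, le_div_iff₀ (by positivity)]
            nlinarith
          rw [max_eq_left hneg, mul_zero]
      · rw [heq, Finset.Ioc_self, Finset.sum_empty]
        have hneg : x - (2*(k:ℝ)+1)/(2*(k:ℝ)) ≤ 0 := by
          rw [sub_nonpos, le_div_iff₀ (by positivity)]
          nlinarith
        rw [max_eq_left hneg, mul_zero]
    unfold phiK
    rw [hIcc, ← hsplit, hsum1, hsum2]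
    field_simp
  have hxu : x - (2*(j:ℝ)+1)/(2*(k:ℝ)) = (x - (j:ℝ)/(k:ℝ)) - 1/(2*(k:ℝ)) := by
    field_simp; ring
  set u := x - (j:ℝ)/(k:ℝ) with hudef
  have hu0 : 0 ≤ u := by
    rw [hudef, sub_nonneg, div_le_iff₀ hk0]
    linarith
  have hu1 : u ≤ 1/(k:ℝ) := by
    rw [hudef, sub_le_iff_le_add, ← add_div, le_div_iff₀ hk0]
    linarith
  rw [key, hxu]
  rcases le_total (u - 1/(2*(k:ℝ))) 0 with hc | hc
  · rw [max_eq_left hc]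
    have : x^2 - (2*(j:ℝ)*x/(k:ℝ) - (j:ℝ)^2/(k:ℝ)^2 + 2/(k:ℝ) * 0) = u^2 := by
      rw [hudef]; field_simp; ring
    rw [this, abs_of_nonneg (sq_nonneg u)]
    have hu2 : u ≤ 1/(2*(k:ℝ)) := by linarith
    have hsq : u^2 ≤ (1/(2*(k:ℝ)))^2 := pow_le_pow_left₀ hu0 hu2 2
    have heq4 : (1/(2*(k:ℝ)))^2 = 1/(4*(k:ℝ)^2) := by field_simp; ring
    linarith
  · rw [max_eq_right hc]
    have : x^2 - (2*(j:ℝ)*x/(k:ℝ) - (j:ℝ)^2/(k:ℝ)^2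
        + 2/(k:ℝ) * (u - 1/(2*(k:ℝ)))) = (u - 1/(k:ℝ))^2 := by
      rw [hudef]; field_simp; ring
    rw [this, abs_of_nonneg (sq_nonneg _)]
    have h1 : 1/(2*(k:ℝ)) ≤ u := by linarith
    have h2 : -(1/(2*(k:ℝ))) ≤ u - 1/(k:ℝ) := by
      have : 1/(2*(k:ℝ)) = 1/(k:ℝ) - 1/(2*(k:ℝ)) := by field_simp; ring
      linarith
    have h3 : u - 1/(k:ℝ) ≤ 1/(2*(k:ℝ)) := by
      have : (0:ℝ) ≤ 1/(2*(k:ℝ)) := by positivity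
      linarith
    have hsq : (u - 1/(k:ℝ))^2 ≤ (1/(2*(k:ℝ)))^2 := sq_le_sq' h2 h3
    have heq4 : (1/(2*(k:ℝ)))^2 = 1/(4*(k:ℝ)^2) := by field_simp; ring
    linarith

lemma phiTilde_approx (k : ℕ) (hk : 1 ≤ k) {t : ℝ} (ht : t ∈ Set.Icc (-1:ℝ) 1) :
    |t^2 - phiTilde k t| ≤ 1/(4*(k:ℝ)^2) := by
  obtain ⟨ht0, ht1⟩ := ht
  rcases le_total 0 t with h | h
  · rw [phiTilde, phiK_of_nonpos k (by linarith : -t ≤ 0), add_zero]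
    exact phiK_approx k hk h ht1
  · rw [phiTilde, phiK_of_nonpos k h, zero_add]
    have := phiK_approx k hk (by linarith : (0:ℝ) ≤ -t) (by linarith : -t ≤ 1)
    rwa [neg_sq] at this
    
lemma phiTilde_zero (k : ℕ) : phiTilde k 0 = 0 := by
  rw [phiTilde, neg_zero, phiK_of_nonpos k le_rfl, add_zero]

/-- For all `(x,y) ∈ [−1,1]²`: `|xy − Ψ(x,y)| ≤ 3/k²`, hence
`|xy − ψ_k(x,y)| ≤ 3/k²` and `ψ_k(x,y) ∈ [−1,1]`; moreover `ψ_k(x,y) = 0` whenever `xy = 0`. -/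
theorem psiK_properties (k : ℕ) (hk : 1 ≤ k) :
    ∀ x ∈ Set.Icc (-1 : ℝ) 1, ∀ y ∈ Set.Icc (-1 : ℝ) 1,
      |x * y - PsiK k x y| ≤ 3 / (k : ℝ) ^ 2 ∧
      |x * y - psiK k x y| ≤ 3 / (k : ℝ) ^ 2 ∧
      psiK k x y ∈ Set.Icc (-1 : ℝ) 1 ∧
      (x * y = 0 → psiK k x y = 0) := by
  intro x hx y hy
  have hk0 : (0:ℝ) < k := by exact_mod_cast hk
  obtain ⟨hx0, hx1⟩ := hx
  obtain ⟨hy0, hy1⟩ := hy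
  have hA := phiTilde_approx k hk (t := (x+y)/2) ⟨by linarith, by linarith⟩
  have hB := phiTilde_approx k hk (t := x/2) ⟨by linarith, by linarith⟩
  have hC := phiTilde_approx k hk (t := y/2) ⟨by linarith, by linarith⟩
  have hpol : x*y - PsiK k x y
      = 2*(((x+y)/2)^2 - phiTilde k ((x+y)/2))
        - 2*((x/2)^2 - phiTilde k (x/2)) - 2*((y/2)^2 - phiTilde k (y/2)) := by
    unfold PsiK; ring
  have ht0 : (0:ℝ) ≤ 1/(4*(k:ℝ)^2) := by positivity
  have h12 : 12 * (1/(4*(k:ℝ)^2)) = 3/(k:ℝ)^2 := by field_simp; ring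
  have hmain : |x*y - PsiK k x y| ≤ 3/(k:ℝ)^2 := by
    obtain ⟨hA1, hA2⟩ := abs_le.mp hA
    obtain ⟨hB1, hB2⟩ := abs_le.mp hB
    obtain ⟨hC1, hC2⟩ := abs_le.mp hC
    rw [hpol, abs_le]
    constructor <;> linarith
  have hxyl : -1 ≤ x*y := by nlinarith
  have hxyu : x*y ≤ 1 := by nlinarith
  have hclip : |x*y - psiK k x y| ≤ |x*y - PsiK k x y| := by
    unfold psiK
    rcases le_total (PsiK k x y) (-1) with h | h
    · rw [max_eq_right h, min_eq_left (by norm_num : (-1:ℝ) ≤ (1:ℝ))]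
      rw [abs_of_nonneg (by linarith), abs_of_nonneg (by linarith)]
      linarith
    · rcases le_total 1 (PsiK k x y) with h2 | h2
      · rw [max_eq_left (by linarith), min_eq_right h2]
        rw [abs_of_nonpos (by linarith), abs_of_nonpos (by linarith)]
        linarith
      · rw [max_eq_left h, min_eq_left h2]
  refine ⟨hmain, le_trans hclip hmain, ⟨le_min (le_max_right _ _) (by norm_num),
    min_le_right _ _⟩, ?_⟩
  intro h0
  rcases mul_eq_zero.mp h0 with hx' | hy'
  · have hP : PsiK k x y = 0 := by
      rw [hx']
      unfold PsiK
      rw [show ((0:ℝ)+y)/2 = y/2 by ring, show (0:ℝ)/2 = (0:ℝ) by norm_num,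
        phiTilde_zero]
      ring
    rw [psiK, hP]
    norm_num
  · have hP : PsiK k x y = 0 := by
      rw [hy']
      unfold PsiK
      rw [show (x+(0:ℝ))/2 = x/2 by ring, show (0:ℝ)/2 = (0:ℝ) by norm_num,
        phiTilde_zero]
      ring
    rw [psiK, hP]
    norm_num
end
end
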